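/- Let f(x) = f_1(x₁) ∏_{ν=2}^d f_{ν|ν-1}(x_ν | x_{ν-1}) be the density of a Markov process, and for 1 < ν < d let m_{ν+1} = rank of the bivariate function (t,s) ↦ f_{ν+1|ν}(t|s). Then rank_{{1,…,ν}}(f) ≤ m_{ν+1}: f admits a decomposition into m_{ν+1} terms separating the variables (x₁,…,x_ν) from (x_{ν+1},…,x_d). -/

import Mathlib

/-- For a Markov density `f(x) = f₁(x₁) ∏_{ν=2}^d f_{ν|ν-1}(x_ν|x_{ν-1})`,
and `1 < ν < d`, if the bivariate transition function `f_{ν+1|ν}` has rank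
`m_{ν+1}`, then `f` admits a decomposition into `m_{ν+1}` terms separating
the variables `(x₁,…,x_ν)` from `(x_{ν+1},…,x_d)`:
`rank_{{1,…,ν}}(f) ≤ m_{ν+1}`. -/
theorem markov_rank_interval {E : Type*} (d : ℕ) (f : (ℕ → E) → ℝ)
    (f₁ : E → ℝ) (trans : ℕ → E → E → ℝ)
    (hf : ∀ x, f x = f₁ (x 1) * ∏ i ∈ Finset.Icc 2 d, trans i (x i) (x (i - 1)))
    (ν : ℕ) (hν1 : 1 < ν) (hνd : ν < d)
    {m : ℕ} (u : Fin m → E → ℝ) (v : Fin m → E → ℝ)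
    (htr : ∀ t s, trans (ν + 1) t s = ∑ k, u k t * v k s) :
    ∃ (a : Fin m → ({i : ℕ // i ≤ ν} → E) → ℝ)
      (b : Fin m → ({i : ℕ // ν < i} → E) → ℝ),
      ∀ x, f x = ∑ k, a k (fun i => x i.1) * b k (fun i => x i.1) := by
  refine ⟨fun k y => f₁ (y ⟨1, hν1.le⟩) *
      (∏ i ∈ (Finset.Icc 2 ν).attach,
        trans i.1 (y ⟨i.1, (Finset.mem_Icc.mp i.2).2⟩)
          (y ⟨i.1 - 1, le_trans (Nat.sub_le _ _) (Finset.mem_Icc.mp i.2).2⟩)) *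
      v k (y ⟨ν, le_rfl⟩),
    fun k z => u k (z ⟨ν + 1, Nat.lt_succ_self ν⟩) *
      (∏ i ∈ (Finset.Icc (ν + 2) d).attach,
        trans i.1 (z ⟨i.1, lt_of_lt_of_le (Nat.lt_add_of_pos_right (by norm_num))
            (Finset.mem_Icc.mp i.2).1⟩)
          (z ⟨i.1 - 1, by
            have h := (Finset.mem_Icc.mp i.2).1
            omega⟩)),
    fun x => ?_⟩
  have h1 : Finset.Icc 2 d = Finset.Ioc 1 d := (Finset.Icc_add_one_left_eq_Ioc 1 d)
  have h2 : Finset.Icc 2 ν = Finset.Ioc 1 ν := (Finset.Icc_add_one_left_eq_Ioc 1 ν)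
  have h3 : Finset.Icc (ν + 2) d = Finset.Ioc (ν + 1) d := (Finset.Icc_add_one_left_eq_Ioc (ν + 1) d)
  have hsplit : (∏ i ∈ Finset.Icc 2 d, trans i (x i) (x (i - 1)))
      = (∏ i ∈ Finset.Icc 2 ν, trans i (x i) (x (i - 1)))
        * trans (ν + 1) (x (ν + 1)) (x ν)
        * (∏ i ∈ Finset.Icc (ν + 2) d, trans i (x i) (x (i - 1))) := by
    rw [h1, h2, h3, ← Finset.prod_Ioc_consecutive _ (le_of_lt hν1) hνd.le,
      ← Finset.prod_Ioc_consecutive _ (Nat.le_succ ν) hνd]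
    have : Finset.Ioc ν (ν + 1) = {ν + 1} := by
      rw [← Finset.Icc_add_one_left_eq_Ioc]; exact Finset.Icc_self (ν + 1)
    rw [this, Finset.prod_singleton, Nat.add_sub_cancel]
    ring
  simp only [Finset.prod_attach (f := fun i => trans i (x i) (x (i - 1)))]
  rw [hf, hsplit, htr]
  simp only [Finset.mul_sum, Finset.sum_mul]
  refine Finset.sum_congr rfl fun k _ => ?_
  ring
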